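/- arXiv:math/0509081 — 2 statements merged into one kernel-verified Lean document; each statement's English description precedes it below -/
import Mathlib

section
/- Let k ≥ 1 be an integer and let f : (0,∞) → [0,∞) be measurable with ∫_0^∞ f(y) dy = 1 and μ_k := ∫_0^∞ y^k f(y) dy ∈ (0,∞). Define g(x) := (1/μ_k)·∫_0^∞ k·(y − x)_+^{k−1}·f(y) dy for x > 0. Then g is (k−1)-times differentiable on (0,∞) with g^{(k−1)}(t) = (−1)^{k−1}·(k!/μ_k)·∫_t^∞ f(y) dy for every t > 0; consequently lim_{s → 0+} g^{(k−1)}(s) = (−1)^{k−1}·k!/μ_k and, for every t > 0, ∫_0^t f(y) dy = 1 − g^{(k−1)}(t) / ( (−1)^{k−1}·k!/μ_k ). -/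
open MeasureTheory Set

lemma aux_pow_lip : ∀ (m : ℕ) {M a b : ℝ}, a ∈ Icc 0 M → b ∈ Icc 0 M →
    |a ^ m - b ^ m| ≤ m * M ^ (m - 1) * |a - b| := by
  intro m
  induction m with
  | zero => intro M a b _ _; simp
  | succ n ih =>
    intro M a b ha hb
    rcases Nat.eq_zero_or_pos n with rfl | hn
    · simp
    · have hM : (0:ℝ) ≤ M := le_trans ha.1 ha.2
      have key : a ^ (n+1) - b ^ (n+1) = a * (a ^ n - b ^ n) + (a - b) * b ^ n := by ring
      have h1 : |a * (a ^ n - b ^ n)| ≤ M * (n * M ^ (n-1) * |a - b|) := by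
        rw [abs_mul]
        have hA : |a| ≤ M := by rw [abs_of_nonneg ha.1]; exact ha.2
        exact mul_le_mul hA (ih ha hb) (abs_nonneg _) (by positivity)
      have h2 : |(a - b) * b ^ n| ≤ |a - b| * M ^ n := by
        rw [abs_mul]
        have : |b ^ n| ≤ M ^ n := by
          rw [abs_of_nonneg (pow_nonneg hb.1 n)]
          exact pow_le_pow_left₀ hb.1 hb.2 n
        exact mul_le_mul_of_nonneg_left this (abs_nonneg _)
      have hpow : M * M ^ (n - 1) = M ^ n := by
        rw [← pow_succ']; congr 1; omega
      calc |a ^ (n+1) - b ^ (n+1)| = |a * (a ^ n - b ^ n) + (a - b) * b ^ n| := by rw [key]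
        _ ≤ |a * (a ^ n - b ^ n)| + |(a - b) * b ^ n| := abs_add_le _ _
        _ ≤ M * (n * M ^ (n-1) * |a - b|) + |a - b| * M ^ n := add_le_add h1 h2
        _ = (n * (M * M ^ (n-1)) + M ^ n) * |a - b| := by ring
        _ = (↑(n+1)) * M ^ ((n+1) - 1) * |a - b| := by rw [hpow]; push_cast; ring

/-- inversion formula in the generalized bird-watching problem: with
`g(x) = (1/μ_k)∫ k(y-x)₊^{k-1} f(y) dy` (the kernel read as `1_{x<y}(y-x)^{k-1}`, which
agrees with `max (y-x) 0 ^ (k-1)` for `k ≥ 2` and is the indicator for `k = 1`),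
`g` is `(k-1)`-times continuously differentiable on `(0,∞)` with
`g^{(k-1)}(t) = (-1)^{k-1}(k!/μ_k)∫_t^∞ f`, `g^{(k-1)}(0+) = (-1)^{k-1} k!/μ_k`, and
`∫_0^t f = 1 - g^{(k-1)}(t)/((-1)^{k-1} k!/μ_k)` for all `t > 0`. -/
theorem stmt14 (k : ℕ) (hk : 1 ≤ k) (f : ℝ → ℝ) (hf_meas : Measurable f)
    (hf_nonneg : ∀ y, 0 < y → 0 ≤ f y)
    (hf_int : IntegrableOn f (Ioi 0))
    (hf_one : ∫ y in Ioi 0, f y = 1)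
    (hmom_int : IntegrableOn (fun y => y ^ k * f y) (Ioi 0))
    (μk : ℝ) (hμk_def : μk = ∫ y in Ioi 0, y ^ k * f y) (hμk_pos : 0 < μk)
    (g : ℝ → ℝ)
    (hg : ∀ t, g t = (1/μk) * ∫ y in Ioi 0,
      (k:ℝ) * (if t < y then (y - t) ^ (k-1) else 0) * f y) :
    ContDiffOn ℝ (k-1 : ℕ) g (Ioi 0) ∧
    (∀ t ∈ Ioi (0:ℝ),
      iteratedDerivWithin (k-1) g (Ioi 0) t
        = (-1:ℝ)^(k-1) * ((Nat.factorial k : ℝ) / μk) * ∫ y in Ioi t, f y) ∧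
    Filter.Tendsto (iteratedDerivWithin (k-1) g (Ioi 0))
      (nhdsWithin 0 (Ioi 0))
      (nhds ((-1:ℝ)^(k-1) * (Nat.factorial k : ℝ) / μk)) ∧
    (∀ t ∈ Ioi (0:ℝ),
      ∫ y in Ioc 0 t, f y
        = 1 - iteratedDerivWithin (k-1) g (Ioi 0) t /
            ((-1:ℝ)^(k-1) * (Nat.factorial k : ℝ) / μk)) := by
  set H : ℕ → ℝ → ℝ := fun m s => ∫ y in Ioi s, (y - s) ^ m * f y with hH
  -- dominating function
  have dom_int : IntegrableOn (fun y => (1 + y ^ k) * f y) (Ioi 0) := by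
    refine (hf_int.add hmom_int).congr (ae_of_all _ fun y => ?_)
    simp only [Pi.add_apply]; ring
  have hb : ∀ m ≤ k, ∀ t : ℝ, 0 ≤ t → ∀ y ∈ Ioi (0:ℝ),
      |max (y - t) 0 ^ m * f y| ≤ (1 + y ^ k) * f y := by
    intro m hm t ht y hy
    have hy0 : (0:ℝ) < y := hy
    have hfy := hf_nonneg y hy0
    have h2 : (0:ℝ) ≤ max (y - t) 0 := le_max_right _ _
    rw [abs_of_nonneg (mul_nonneg (pow_nonneg h2 m) hfy)]
    have h1 : max (y - t) 0 ≤ y := max_le (by linarith) hy0.le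
    have h3 : max (y - t) 0 ^ m ≤ y ^ m := pow_le_pow_left₀ h2 h1 m
    have hym : y ^ m ≤ 1 + y ^ k := by
      rcases le_total y 1 with h | h
      · have := pow_le_one₀ hy0.le h (n := m)
        nlinarith [pow_nonneg hy0.le k]
      · have := pow_le_pow_right₀ h hm
        linarith
    exact mul_le_mul_of_nonneg_right (h3.trans hym) hfy
  have int_max : ∀ m ≤ k, ∀ t : ℝ, 0 ≤ t →
      IntegrableOn (fun y => max (y - t) 0 ^ m * f y) (Ioi 0) := by
    intro m hm t ht
    refine Integrable.mono' dom_int ?_ ?_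
    · exact ((((measurable_id.sub_const t).max measurable_const).pow_const m).mul
        hf_meas).aestronglyMeasurable
    · filter_upwards [ae_restrict_mem measurableSet_Ioi] with y hy
      rw [Real.norm_eq_abs]
      exact hb m hm t ht y hy
  have ind_eq : ∀ m : ℕ, 1 ≤ m → ∀ t : ℝ,
      (fun y => max (y - t) 0 ^ m * f y)
        = fun y => Set.indicator (Ioi t) (fun y => (y - t) ^ m * f y) y := by
    intro m hm t
    funext y
    by_cases h : t < y
    · rw [Set.indicator_of_mem (mem_Ioi.2 h), max_eq_left (by linarith)]
    · rw [Set.indicator_of_notMem (fun hmem => h (mem_Ioi.1 hmem)),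
        max_eq_right (by push_neg at h; linarith), zero_pow (by omega), zero_mul]
  have int_ind : ∀ (m : ℕ) (t : ℝ), 0 ≤ t →
      (∫ y in Ioi (0:ℝ), Set.indicator (Ioi t) (fun y => (y - t) ^ m * f y) y) = H m t := by
    intro m t ht
    rw [setIntegral_indicator measurableSet_Ioi, Set.Ioi_inter_Ioi, sup_eq_right.2 ht]
  have Heq : ∀ m : ℕ, 1 ≤ m → ∀ t : ℝ, 0 ≤ t →
      H m t = ∫ y in Ioi (0:ℝ), max (y - t) 0 ^ m * f y := by
    intro m hm t ht
    rw [ind_eq m hm t]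
    exact (int_ind m t ht).symm
  have hne : ∀ t : ℝ, ∀ᵐ y ∂(volume.restrict (Ioi (0:ℝ))), y ≠ t := by
    intro t
    refine ae_restrict_of_ae ?_
    refine ae_iff.2 ?_
    have : {y : ℝ | ¬ y ≠ t} = {t} := by ext y; simp
    rw [this]
    exact measure_singleton t
  -- derivative of H m
  have hder : ∀ m : ℕ, 1 ≤ m → m ≤ k → ∀ t : ℝ, 0 < t →
      HasDerivAt (H m) (-((m:ℝ) * H (m - 1) t)) t := by
    intro m hm1 hmk t ht
    set F' : ℝ → ℝ := fun y => (-((m:ℝ) * (if t < y then (y - t) ^ (m-1) else 0))) * f y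
      with hF'
    have step := hasDerivAt_integral_of_dominated_loc_of_lip
      (F := fun x y => max (y - x) 0 ^ m * f y) (F' := F') (x₀ := t)
      (bound := fun y => ((m : ℝ) * (t + 2) ^ k) * ((1 + y ^ k) * f y))
      (μ := volume.restrict (Ioi 0)) (Metric.ball_mem_nhds t one_pos)
      (Filter.Eventually.of_forall fun x =>
        ((((measurable_id.sub_const x).max measurable_const).pow_const m).mul
          hf_meas).aestronglyMeasurable)
      (int_max m hmk t ht.le)
      ((((Measurable.ite measurableSet_Ioi ((measurable_id.sub_const t).pow_const (m-1))
          measurable_const).const_mul (m:ℝ)).neg.mul hf_meas).aestronglyMeasurable)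
      ?_ ((dom_int.const_mul _)) ?_
    · have hval : (∫ y in Ioi (0:ℝ), F' y) = -((m:ℝ) * H (m - 1) t) := by
        have e : F' = fun y => (-(m:ℝ)) *
            Set.indicator (Ioi t) (fun y => (y - t) ^ (m-1) * f y) y := by
          funext y
          by_cases h : t < y
          · rw [hF']; simp only [h, if_true, Set.indicator_of_mem (mem_Ioi.2 h)]; ring
          · rw [hF']; simp only [h, if_false, Set.indicator_of_notMem (fun hmem => h (mem_Ioi.1 hmem))]
            ring
        rw [e, MeasureTheory.integral_const_mul, int_ind (m-1) t ht.le]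
        ring
      rw [hval] at step
      have hev : H m =ᶠ[nhds t] (fun x => ∫ y in Ioi (0:ℝ), max (y - x) 0 ^ m * f y) := by
        filter_upwards [Ioi_mem_nhds ht] with x hx
        exact Heq m hm1 x (le_of_lt hx)
      exact step.2.congr_of_eventuallyEq hev
    · -- Lipschitz
      filter_upwards [ae_restrict_mem measurableSet_Ioi] with y hy
      have hy0 : (0:ℝ) < y := hy
      have hfy := hf_nonneg y hy0
      rw [lipschitzOnWith_iff_dist_le_mul]
      intro a ha b hb
      have hmem : ∀ x ∈ Metric.ball t 1, max (y - x) 0 ∈ Icc (0:ℝ) (y + t + 1) := by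
        intro x hx
        rw [Metric.mem_ball, Real.dist_eq, abs_lt] at hx
        exact ⟨le_max_right _ _, max_le (by linarith) (by linarith)⟩
      have hlip := aux_pow_lip m (hmem a ha) (hmem b hb)
      have habs : |max (y - a) 0 - max (y - b) 0| ≤ |a - b| := by
        have := abs_max_sub_max_le_abs (y - a) (y - b) 0
        simpa [abs_sub_comm] using this
      have hM1 : y + t + 1 ≤ (t + 2) * max 1 y := by
        rcases le_total y 1 with h | h
        · rw [max_eq_left h]; linarith
        · rw [max_eq_right h]; nlinarith
      have hmax0 : (0:ℝ) ≤ max 1 y := le_trans zero_le_one (le_max_left _ _)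
      have hM2 : (y + t + 1) ^ (m-1) ≤ (t + 2) ^ k * (1 + y ^ k) := by
        calc (y + t + 1) ^ (m-1) ≤ ((t + 2) * max 1 y) ^ (m-1) :=
              pow_le_pow_left₀ (by linarith) hM1 _
          _ = (t + 2) ^ (m-1) * (max 1 y) ^ (m-1) := mul_pow _ _ _
          _ ≤ (t + 2) ^ k * (1 + y ^ k) := by
              have e1 : (t + 2) ^ (m-1) ≤ (t + 2) ^ k :=
                pow_le_pow_right₀ (by linarith) (by omega)
              have e2 : (max 1 y) ^ (m-1) ≤ 1 + y ^ k := by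
                rcases le_total y 1 with h | h
                · rw [max_eq_left h, one_pow]; nlinarith [pow_nonneg hy0.le k]
                · rw [max_eq_right h]
                  have := pow_le_pow_right₀ h (show m - 1 ≤ k by omega)
                  linarith
              exact mul_le_mul e1 e2 (by positivity) (by positivity)
      have hbnd : (m:ℝ) * (y + t + 1) ^ (m-1) * f y
          ≤ ((m : ℝ) * (t + 2) ^ k) * ((1 + y ^ k) * f y) := by
        have : (m:ℝ) * (y + t + 1) ^ (m-1) ≤ (m : ℝ) * ((t + 2) ^ k * (1 + y ^ k)) :=
          mul_le_mul_of_nonneg_left hM2 (by positivity)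
        nlinarith
      have hnn : (0:ℝ) ≤ ((m : ℝ) * (t + 2) ^ k) * ((1 + y ^ k) * f y) := by positivity
      calc dist (max (y - a) 0 ^ m * f y) (max (y - b) 0 ^ m * f y)
          = |max (y - a) 0 ^ m - max (y - b) 0 ^ m| * f y := by
            rw [Real.dist_eq, show max (y - a) 0 ^ m * f y - max (y - b) 0 ^ m * f y
              = (max (y - a) 0 ^ m - max (y - b) 0 ^ m) * f y from by ring,
              abs_mul, abs_of_nonneg hfy]
        _ ≤ ((m:ℝ) * (y + t + 1) ^ (m-1) * |max (y - a) 0 - max (y - b) 0|) * f y :=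
            mul_le_mul_of_nonneg_right hlip hfy
        _ ≤ ((m:ℝ) * (y + t + 1) ^ (m-1) * f y) * |a - b| := by
            have : (m:ℝ) * (y + t + 1) ^ (m-1) * |max (y - a) 0 - max (y - b) 0|
                ≤ (m:ℝ) * (y + t + 1) ^ (m-1) * |a - b| := by
              refine mul_le_mul_of_nonneg_left habs (by positivity)
            nlinarith [abs_nonneg (a - b), mul_le_mul_of_nonneg_right this hfy]
        _ ≤ (((m : ℝ) * (t + 2) ^ k) * ((1 + y ^ k) * f y)) * |a - b| :=
            mul_le_mul_of_nonneg_right hbnd (abs_nonneg _)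
        _ = ↑(Real.nnabs (((m : ℝ) * (t + 2) ^ k) * ((1 + y ^ k) * f y))) * dist a b := by
            rw [Real.coe_nnabs, abs_of_nonneg hnn, Real.dist_eq]
    · -- differentiability a.e.
      filter_upwards [hne t] with y hy
      rcases lt_or_gt_of_ne hy with hlt | hgt
      · -- y < t
        have hev : (fun x => max (y - x) 0 ^ m * f y) =ᶠ[nhds t] (fun _ => (0:ℝ)) := by
          filter_upwards [Ioi_mem_nhds hlt] with x hx
          rw [max_eq_right (by simp only [mem_Ioi] at hx; linarith), zero_pow (by omega),
            zero_mul]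
        have h0 : HasDerivAt (fun _ : ℝ => (0:ℝ)) 0 t := hasDerivAt_const t 0
        have : F' y = 0 := by
          rw [hF']; simp [not_lt.2 hlt.le]
        rw [this]
        exact h0.congr_of_eventuallyEq hev
      · -- t < y
        have hd : HasDerivAt (fun x : ℝ => (y - x) ^ m * f y)
            (((m:ℝ) * (y - t) ^ (m-1) * (-1)) * f y) t :=
          (((hasDerivAt_id t).const_sub y).pow m).mul_const (f y)
        have hev : (fun x => max (y - x) 0 ^ m * f y)
            =ᶠ[nhds t] (fun x => (y - x) ^ m * f y) := by
          filter_upwards [Iio_mem_nhds hgt] with x hx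
          rw [max_eq_left (by simp only [mem_Iio] at hx; linarith)]
        have : F' y = ((m:ℝ) * (y - t) ^ (m-1) * (-1)) * f y := by
          rw [hF']; simp only [hgt, if_true]; ring
        rw [this]
        exact hd.congr_of_eventuallyEq hev
  -- continuity of H 0 from the right / within
  have hcont0 : ∀ t : ℝ, 0 ≤ t →
      Filter.Tendsto (H 0) (nhdsWithin t (Ioi 0)) (nhds (H 0 t)) := by
    intro t ht
    have key : Filter.Tendsto (fun s => ∫ y in Ioi (0:ℝ), Set.indicator (Ioi s) f y)
        (nhdsWithin t (Ioi 0)) (nhds (∫ y in Ioi (0:ℝ), Set.indicator (Ioi t) f y)) := by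
      refine tendsto_integral_filter_of_dominated_convergence (fun y => ‖f y‖)
        (Filter.Eventually.of_forall fun s =>
          (hf_meas.indicator measurableSet_Ioi).aestronglyMeasurable)
        (Filter.Eventually.of_forall fun s =>
          ae_of_all _ fun y => norm_indicator_le_norm_self f y)
        hf_int.norm ?_
      filter_upwards [hne t] with y hy
      rcases lt_or_gt_of_ne hy with hlt | hgt
      · have hevc : (fun s => Set.indicator (Ioi s) f y)
            =ᶠ[nhdsWithin t (Ioi 0)] (fun _ => Set.indicator (Ioi t) f y) := by
          filter_upwards [nhdsWithin_le_nhds (Ioi_mem_nhds hlt)] with s hs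
          have h1 : y ∉ Ioi s := by simp only [mem_Ioi, not_lt]; exact hs.le
          have h2 : y ∉ Ioi t := by simp only [mem_Ioi, not_lt]; exact hlt.le
          rw [Set.indicator_of_notMem h1, Set.indicator_of_notMem h2]
        exact Filter.Tendsto.congr' hevc.symm tendsto_const_nhds
      · have hevc : (fun s => Set.indicator (Ioi s) f y)
            =ᶠ[nhdsWithin t (Ioi 0)] (fun _ => Set.indicator (Ioi t) f y) := by
          filter_upwards [nhdsWithin_le_nhds (Iio_mem_nhds hgt)] with s hs
          rw [Set.indicator_of_mem (mem_Ioi.2 hs), Set.indicator_of_mem (mem_Ioi.2 hgt)]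
        exact Filter.Tendsto.congr' hevc.symm tendsto_const_nhds
    have e1 : ∀ s : ℝ, 0 ≤ s → (∫ y in Ioi (0:ℝ), Set.indicator (Ioi s) f y) = H 0 s := by
      intro s hs
      have e2 : Set.indicator (Ioi s) f = fun y =>
          Set.indicator (Ioi s) (fun y => (y - s) ^ 0 * f y) y := by
        funext y; simp
      rw [e2, int_ind 0 s hs]
    have := key.congr' (by
      filter_upwards [self_mem_nhdsWithin] with s hs
      exact e1 s (le_of_lt hs))
    rwa [e1 t ht] at this
  -- smoothness of H m
  have hHcd : ∀ m : ℕ, m ≤ k - 1 → ContDiffOn ℝ m (H m) (Ioi 0) := by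
    intro m
    induction m with
    | zero =>
      intro _
      rw [Nat.cast_zero, contDiffOn_zero]
      intro t ht
      exact hcont0 t (le_of_lt ht)
    | succ n ih =>
      intro hle
      have hn : n ≤ k - 1 := by omega
      have hder' : ∀ t ∈ Ioi (0:ℝ), HasDerivAt (H (n+1)) (-((n+1 : ℕ) * H n t)) t :=
        fun t ht => hder (n+1) (by omega) (by omega) t ht
      rw [show ((n+1 : ℕ) : WithTop ℕ∞) = (n : WithTop ℕ∞) + 1 by push_cast; ring]
      refine (contDiffOn_succ_iff_derivWithin (uniqueDiffOn_Ioi 0)).2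
        ⟨fun t ht => (hder' t ht).differentiableAt.differentiableWithinAt, ?_, ?_⟩
      · intro h; exact absurd h (by simp)
      · have hc : ContDiffOn ℝ (n : ℕ) (fun t : ℝ => -(((n+1 : ℕ):ℝ) * H n t)) (Ioi 0) :=
          (contDiffOn_const.mul (ih hn)).neg
        refine hc.congr ?_
        intro t ht
        rw [derivWithin_of_isOpen isOpen_Ioi ht, (hder' t ht).deriv]
  -- g in terms of H
  have hgH : ∀ t ∈ Ioi (0:ℝ), g t = ((k:ℝ)/μk) * H (k-1) t := by
    intro t ht
    rw [hg t]
    have e : (fun y => (k:ℝ) * (if t < y then (y - t) ^ (k-1) else 0) * f y)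
        = fun y => (k:ℝ) * Set.indicator (Ioi t) (fun y => (y - t) ^ (k-1) * f y) y := by
      funext y
      by_cases h : t < y
      · rw [Set.indicator_of_mem (mem_Ioi.2 h)]; simp only [h, if_true]; ring
      · rw [Set.indicator_of_notMem (fun hmem => h (mem_Ioi.1 hmem))]; simp only [h, if_false]; ring
    rw [e, MeasureTheory.integral_const_mul, int_ind (k-1) t (le_of_lt ht)]
    field_simp
  have cdg : ContDiffOn ℝ (k-1 : ℕ) g (Ioi 0) :=
    (contDiffOn_const.mul (hHcd (k-1) le_rfl)).congr fun t ht => hgH t ht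
  -- iterated derivative formula
  have hiter : ∀ j : ℕ, j ≤ k - 1 → ∀ t ∈ Ioi (0:ℝ),
      iteratedDerivWithin j g (Ioi 0) t
        = (-1:ℝ)^j * ((k:ℝ)/μk) * (Nat.descFactorial (k-1) j : ℝ) * H (k-1-j) t := by
    intro j
    induction j with
    | zero =>
      intro _ t ht
      rw [iteratedDerivWithin_zero, hgH t ht]
      simp
    | succ j ih =>
      intro hle t ht
      have hj : j ≤ k - 1 := by omega
      rw [iteratedDerivWithin_succ]
      have e : EqOn (iteratedDerivWithin j g (Ioi 0))
          (fun s => (-1:ℝ)^j * ((k:ℝ)/μk) * (Nat.descFactorial (k-1) j : ℝ) * H (k-1-j) s)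
          (Ioi 0) := fun s hs => ih hj s hs
      rw [derivWithin_congr e (e ht), derivWithin_of_isOpen isOpen_Ioi ht]
      have hd : HasDerivAt
          (fun s => (-1:ℝ)^j * ((k:ℝ)/μk) * (Nat.descFactorial (k-1) j : ℝ) * H (k-1-j) s)
          ((-1:ℝ)^j * ((k:ℝ)/μk) * (Nat.descFactorial (k-1) j : ℝ) *
            (-(((k-1-j : ℕ):ℝ) * H (k-1-j-1) t))) t :=
        HasDerivAt.const_mul _ (hder (k-1-j) (by omega) (by omega) t ht)
      rw [hd.deriv]
      have h1 : k - 1 - j - 1 = k - 1 - (j+1) := by omega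
      have h2 : (Nat.descFactorial (k-1) (j+1) : ℝ)
          = ((k-1-j : ℕ) : ℝ) * (Nat.descFactorial (k-1) j : ℝ) := by
        rw [Nat.descFactorial_succ]; push_cast; ring
      rw [h1, h2, pow_succ]
      ring
  -- the (k-1)-st derivative
  have hH0 : ∀ t : ℝ, H 0 t = ∫ y in Ioi t, f y := by
    intro t; rw [hH]; simp
  have hform : ∀ t ∈ Ioi (0:ℝ), iteratedDerivWithin (k-1) g (Ioi 0) t
      = (-1:ℝ)^(k-1) * ((Nat.factorial k : ℝ) / μk) * ∫ y in Ioi t, f y := by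
    intro t ht
    rw [hiter (k-1) le_rfl t ht, Nat.sub_self, hH0 t, Nat.descFactorial_self]
    have hkf : (k:ℝ) * ((k-1).factorial : ℝ) = (k.factorial : ℝ) := by
      exact_mod_cast Nat.mul_factorial_pred (by omega)
    rw [← hkf]
    ring
  refine ⟨cdg, hform, ?_, ?_⟩
  · -- tendsto
    have heq : iteratedDerivWithin (k-1) g (Ioi 0)
        =ᶠ[nhdsWithin 0 (Ioi 0)]
          (fun t => (-1:ℝ)^(k-1) * ((Nat.factorial k : ℝ) / μk) * H 0 t) := by
      filter_upwards [self_mem_nhdsWithin] with t ht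
      rw [hform t ht, hH0 t]
    have hten : Filter.Tendsto (fun t => (-1:ℝ)^(k-1) * ((Nat.factorial k : ℝ) / μk) * H 0 t)
        (nhdsWithin 0 (Ioi 0))
        (nhds ((-1:ℝ)^(k-1) * ((Nat.factorial k : ℝ) / μk) * H 0 0)) :=
      (hcont0 0 le_rfl).const_mul _
    have hv : H 0 0 = 1 := by rw [hH0 0]; exact hf_one
    rw [hv, mul_one] at hten
    have := Filter.Tendsto.congr' heq.symm hten
    convert this using 2
    ring
  · -- inversion
    intro t ht
    rw [hform t ht]
    have hc : ((-1:ℝ)^(k-1) * (Nat.factorial k : ℝ) / μk) ≠ 0 := by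
      apply div_ne_zero
      · exact mul_ne_zero (pow_ne_zero _ (by norm_num))
          (Nat.cast_ne_zero.2 k.factorial_ne_zero)
      · exact hμk_pos.ne'
    have e : (-1:ℝ)^(k-1) * ((Nat.factorial k : ℝ) / μk) * (∫ y in Ioi t, f y)
        = ((-1:ℝ)^(k-1) * (Nat.factorial k : ℝ) / μk) * (∫ y in Ioi t, f y) := by ring
    rw [e, mul_div_cancel_left₀ _ hc]
    have hsplit : (∫ y in Ioc (0:ℝ) t, f y) + ∫ y in Ioi t, f y = ∫ y in Ioi (0:ℝ), f y := by
      rw [← MeasureTheory.setIntegral_union (Ioc_disjoint_Ioi le_rfl) measurableSet_Ioi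
        (hf_int.mono_set Ioc_subset_Ioi_self) (hf_int.mono_set (Ioi_subset_Ioi (le_of_lt ht))),
        Ioc_union_Ioi_eq_Ioi (le_of_lt ht)]
    linarith [hf_one]
end

section
/- Let k ≥ 1 be an integer and let μ be a probability measure on (0,∞) with distribution function F(t) := μ((0,t]). Define g(x) := ∫_{(0,∞)} (k/y^k)·(y − x)_+^{k−1} dμ(y) for x > 0 and G(t) := ∫_0^t g(x) dx for t > 0, where z_+ := max(z,0). Then for every t > 0 with μ({t}) = 0, the function G is k-times differentiable at t and F(t) = ∑_{j=0}^{k} (−1)^j·(t^j/j!)·G^{(j)}(t). -/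
open MeasureTheory Set Filter
open scoped ENNReal Topology

namespace Stmt15Aux

lemma abs_pow_sub_pow_le {a b R : ℝ} (ha : 0 ≤ a) (hb : 0 ≤ b) (haR : a ≤ R) (hbR : b ≤ R)
    (n : ℕ) : |a ^ n - b ^ n| ≤ n * R ^ (n - 1) * |a - b| := by
  have hR : 0 ≤ R := le_trans ha haR
  rw [← geom_sum₂_mul a b n, abs_mul]
  apply mul_le_mul_of_nonneg_right _ (abs_nonneg _)
  calc |∑ i ∈ Finset.range n, a ^ i * b ^ (n - 1 - i)|
      ≤ ∑ i ∈ Finset.range n, |a ^ i * b ^ (n - 1 - i)| := Finset.abs_sum_le_sum_abs _ _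
    _ ≤ ∑ _i ∈ Finset.range n, R ^ (n - 1) := by
        apply Finset.sum_le_sum
        intro i hi
        rw [Finset.mem_range] at hi
        rw [abs_mul, abs_pow, abs_pow, abs_of_nonneg ha, abs_of_nonneg hb]
        calc a ^ i * b ^ (n - 1 - i) ≤ R ^ i * R ^ (n - 1 - i) := by gcongr
          _ = R ^ (n - 1) := by rw [← pow_add]; congr 1; omega
    _ = n * R ^ (n - 1) := by rw [Finset.sum_const, Finset.card_range, nsmul_eq_mul]

lemma hasDerivAt_maxpow {m : ℕ} (hm : 1 ≤ m) (u₀ : ℝ) (h : 2 ≤ m ∨ u₀ ≠ 0) :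
    HasDerivAt (fun u : ℝ => max u 0 ^ m) ((m : ℝ) * (if 0 < u₀ then u₀ ^ (m - 1) else 0)) u₀ := by
  rcases lt_trichotomy u₀ 0 with hu | hu | hu
  · rw [if_neg (by linarith), mul_zero]
    have heq : (fun u : ℝ => max u 0 ^ m) =ᶠ[𝓝 u₀] fun _ => (0:ℝ) ^ m := by
      filter_upwards [Iio_mem_nhds hu] with u hu'
      rw [max_eq_right (le_of_lt hu')]
    exact (hasDerivAt_const u₀ ((0:ℝ) ^ m)).congr_of_eventuallyEq heq
  · subst hu
    have hm2 : 2 ≤ m := h.resolve_right (by simp)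
    rw [if_neg (lt_irrefl 0), mul_zero]
    rw [hasDerivAt_iff_tendsto_slope]
    have hb : Tendsto (fun u : ℝ => |u| ^ (m - 1)) (𝓝[≠] (0:ℝ)) (𝓝 0) := by
      have : Tendsto (fun u : ℝ => |u| ^ (m - 1)) (𝓝 0) (𝓝 (|(0:ℝ)| ^ (m - 1))) :=
        ((continuous_abs.pow (m-1)).tendsto 0)
      simpa [zero_pow (show m - 1 ≠ 0 by omega)] using this.mono_left nhdsWithin_le_nhds
    apply squeeze_zero_norm _ hb
    intro u
    rcases eq_or_ne u 0 with rfl | hu0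
    · simp [slope, zero_pow (show m - 1 ≠ 0 by omega)]
    · have : slope (fun u : ℝ => max u 0 ^ m) 0 u = max u 0 ^ m / u := by
        simp [slope, zero_pow (show m ≠ 0 by omega), div_eq_inv_mul]
      rw [this]
      have h1 : max u 0 ^ m ≤ |u| ^ m := by
        apply pow_le_pow_left₀ (le_max_right u 0)
        exact max_le (le_abs_self u) (abs_nonneg u)
      have h2 : (0:ℝ) ≤ max u 0 ^ m := pow_nonneg (le_max_right u 0) m
      rw [Real.norm_eq_abs, abs_div, abs_of_nonneg h2]
      rw [div_le_iff₀ (abs_pos.mpr hu0)]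
      calc max u 0 ^ m ≤ |u| ^ m := h1
        _ = |u| ^ (m - 1) * |u| := by rw [← pow_succ]; congr 1; omega
  · rw [if_pos hu]
    have heq : (fun u : ℝ => max u 0 ^ m) =ᶠ[𝓝 u₀] fun u => u ^ m := by
      filter_upwards [Ioi_mem_nhds hu] with u hu'
      rw [max_eq_left (le_of_lt hu')]
    exact (hasDerivAt_pow m u₀).congr_of_eventuallyEq heq

noncomputable def psi (k : ℕ) (μ : Measure ℝ) (j : ℕ) (t : ℝ) : ℝ :=
  ∫ y, (if t < y then (y - t) ^ (k - j) else 0) / y ^ k ∂μ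

variable {k : ℕ} {μ : Measure ℝ}

lemma ae_pos (hμ0 : μ (Iic 0) = 0) : ∀ᵐ y ∂μ, 0 < y := by
  rw [ae_iff]
  convert hμ0 using 2
  ext y
  simp [not_lt]

lemma meas_integrand (k j : ℕ) (t : ℝ) :
    Measurable fun y : ℝ => (if t < y then (y - t) ^ (k - j) else 0) / y ^ k := by
  apply Measurable.div _ (measurable_id.pow_const k)
  exact Measurable.ite measurableSet_Ioi ((measurable_id.sub_const t).pow_const _)
    measurable_const

lemma if_eq_maxpow {m : ℕ} (hm : 1 ≤ m) (t y : ℝ) :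
    (if t < y then (y - t) ^ m else 0) = max (y - t) 0 ^ m := by
  rcases lt_or_ge t y with h | h
  · rw [if_pos h, max_eq_left (by linarith)]
  · rw [if_neg (not_lt.mpr h), max_eq_right (by linarith), zero_pow (by omega)]

lemma integrand_bound {j : ℕ} (hj : j ≤ k) {t y : ℝ} (ht : 0 < t) (hy : 0 < y) :
    |(if t < y then (y - t) ^ (k - j) else 0) / y ^ k| ≤ (1 / t) ^ j := by
  rcases lt_or_ge t y with h | h
  · rw [if_pos h]
    have hyt : (0:ℝ) ≤ y - t := by linarith
    have hyk : (0:ℝ) < y ^ k := pow_pos hy k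
    rw [abs_div, abs_of_nonneg (pow_nonneg hyt _), abs_of_nonneg hyk.le]
    rw [div_le_iff₀ hyk]
    have hkk : y ^ k = y ^ (k - j) * y ^ j := by rw [← pow_add]; congr 1; omega
    calc (y - t) ^ (k - j) ≤ y ^ (k - j) := pow_le_pow_left₀ hyt (by linarith) _
      _ = y ^ (k - j) * 1 := (mul_one _).symm
      _ ≤ y ^ (k - j) * ((1 / t) ^ j * y ^ j) := by
          apply mul_le_mul_of_nonneg_left _ (pow_nonneg hy.le _)
          rw [← mul_pow]
          apply one_le_pow₀
          rw [one_div, inv_mul_eq_div, le_div_iff₀ ht]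
          linarith
      _ = (1 / t) ^ j * y ^ k := by rw [hkk]; ring
  · rw [if_neg (not_lt.mpr h), zero_div, abs_zero]
    positivity

lemma integrand_integrable [IsFiniteMeasure μ] (hμ0 : μ (Iic 0) = 0) {j : ℕ} (hj : j ≤ k)
    {t : ℝ} (ht : 0 < t) :
    Integrable (fun y : ℝ => (if t < y then (y - t) ^ (k - j) else 0) / y ^ k) μ := by
  refine Integrable.mono' (integrable_const ((1 / t) ^ j))
    (meas_integrand k j t).aestronglyMeasurable ?_
  filter_upwards [ae_pos hμ0] with y hy
  exact integrand_bound hj ht hy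

lemma hasDerivAt_psi [IsFiniteMeasure μ] (hμ0 : μ (Iic 0) = 0) {j : ℕ} (hj : j + 1 ≤ k)
    {s : ℝ} (hs : 0 < s) (hcond : j + 2 ≤ k ∨ μ {s} = 0) :
    HasDerivAt (psi k μ j) (-(((k - j : ℕ)) : ℝ) * psi k μ (j + 1) s) s := by
  set m := k - j with hm
  have hm1 : 1 ≤ m := by omega
  have hmk : m ≤ k := by omega
  set C : ℝ := (k : ℝ) * (2 / s) ^ (j + 1) with hC
  have hC0 : 0 ≤ C := by positivity
  have key := hasDerivAt_integral_of_dominated_loc_of_lip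
    (F := fun t y : ℝ => (if t < y then (y - t) ^ (k - j) else 0) / y ^ k)
    (F' := fun y : ℝ => (-(((k - j : ℕ)) : ℝ) * (if s < y then (y - s) ^ (k - (j+1)) else 0)) / y ^ k)
    (x₀ := s) (bound := fun _ => C) (s := Metric.ball s (s / 2)) (μ := μ) (Metric.ball_mem_nhds s (by positivity))
    (Eventually.of_forall fun x => (meas_integrand k j x).aestronglyMeasurable)
    (integrand_integrable hμ0 (by omega) hs)
    ?_ ?_ (integrable_const C) ?_
  · have h2 := key.2
    have : (∫ y, (-(((k - j : ℕ)) : ℝ) * (if s < y then (y - s) ^ (k - (j+1)) else 0)) / y ^ k ∂μ)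
        = -(((k - j : ℕ)) : ℝ) * psi k μ (j + 1) s := by
      rw [psi, ← integral_const_mul]
      congr 1
      ext y
      ring
    rw [this] at h2
    exact h2
  · apply Measurable.aestronglyMeasurable
    apply Measurable.div _ (measurable_id.pow_const k)
    exact Measurable.const_mul (Measurable.ite measurableSet_Ioi
      ((measurable_id.sub_const s).pow_const _) measurable_const) _
  · -- Lipschitz
    filter_upwards [ae_pos hμ0] with y hy
    rw [lipschitzOnWith_iff_dist_le_mul]
    intro t₁ ht₁ t₂ ht₂
    have hcoe : (Real.nnabs C : ℝ) = C := by
      rw [Real.coe_nnabs, abs_of_nonneg hC0]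
    rw [Real.dist_eq, Real.dist_eq, hcoe]
    have hFeq : ∀ t : ℝ, (if t < y then (y - t) ^ (k - j) else 0) / y ^ k
        = max (y - t) 0 ^ m / y ^ k := by
      intro t; rw [if_eq_maxpow hm1]
    rw [hFeq, hFeq]
    have hb1 : s / 2 < t₁ := by
      have := mem_ball_iff_norm.mp ht₁
      rw [Real.norm_eq_abs, abs_lt] at this
      linarith [this.1]
    have hb2 : s / 2 < t₂ := by
      have := mem_ball_iff_norm.mp ht₂
      rw [Real.norm_eq_abs, abs_lt] at this
      linarith [this.1]
    rcases le_or_gt y (s / 2) with hys | hys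
    · have e1 : max (y - t₁) 0 = 0 := max_eq_right (by linarith)
      have e2 : max (y - t₂) 0 = 0 := max_eq_right (by linarith)
      rw [e1, e2, sub_self, abs_zero]
      positivity
    · have hyk : (0:ℝ) < y ^ k := pow_pos hy k
      rw [div_sub_div_same, abs_div, abs_of_nonneg hyk.le, div_le_iff₀ hyk]
      have habs : |max (y - t₁) 0 - max (y - t₂) 0| ≤ |t₁ - t₂| := by
        have := abs_max_sub_max_le_abs (y - t₁) (y - t₂) 0
        calc |max (y - t₁) 0 - max (y - t₂) 0| ≤ |(y - t₁) - (y - t₂)| := this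
          _ = |t₁ - t₂| := by rw [show (y - t₁) - (y - t₂) = -(t₁ - t₂) by ring, abs_neg]
      calc |max (y - t₁) 0 ^ m - max (y - t₂) 0 ^ m|
          ≤ m * y ^ (m - 1) * |max (y - t₁) 0 - max (y - t₂) 0| := by
            apply abs_pow_sub_pow_le (le_max_right _ _) (le_max_right _ _)
              (max_le (by linarith) hy.le) (max_le (by linarith) hy.le)
        _ ≤ m * y ^ (m - 1) * |t₁ - t₂| := by
            apply mul_le_mul_of_nonneg_left habs
            positivity
        _ ≤ C * |t₁ - t₂| * y ^ k := by
            rw [show C * |t₁ - t₂| * y ^ k = (C * y ^ k) * |t₁ - t₂| by ring]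
            apply mul_le_mul_of_nonneg_right _ (abs_nonneg _)
            have hyj : y ^ (m - 1) * (1:ℝ) ≤ y ^ (m - 1) * ((2 / s) ^ (j + 1) * y ^ (j + 1)) := by
              apply mul_le_mul_of_nonneg_left _ (pow_nonneg hy.le _)
              rw [← mul_pow]
              apply one_le_pow₀
              rw [div_mul_eq_mul_div, le_div_iff₀ (by linarith : (0:ℝ) < s)]
              linarith
            calc (m : ℝ) * y ^ (m - 1) = (m : ℝ) * (y ^ (m - 1) * 1) := by ring
              _ ≤ (m : ℝ) * (y ^ (m - 1) * ((2 / s) ^ (j + 1) * y ^ (j + 1))) := by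
                  apply mul_le_mul_of_nonneg_left hyj (Nat.cast_nonneg m)
              _ = (m : ℝ) * (2 / s) ^ (j + 1) * y ^ ((m - 1) + (j + 1)) := by
                  rw [pow_add]; ring
              _ ≤ (k : ℝ) * (2 / s) ^ (j + 1) * y ^ k := by
                  have : (m - 1) + (j + 1) = k := by omega
                  rw [this]
                  apply mul_le_mul_of_nonneg_right _ (pow_nonneg hy.le k)
                  apply mul_le_mul_of_nonneg_right _ (by positivity)
                  exact_mod_cast Nat.cast_le.mpr hmk
              _ = C * y ^ k := by rw [hC]
  · -- differentiability a.e.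
    have hae : ∀ᵐ y ∂μ, 0 < y ∧ (2 ≤ m ∨ y ≠ s) := by
      rcases hcond with hc | hc
      · filter_upwards [ae_pos hμ0] with y hy
        exact ⟨hy, Or.inl (by omega)⟩
      · have hne : ∀ᵐ y ∂μ, y ≠ s := by
          rw [ae_iff]
          convert hc using 2
          ext y; simp
        filter_upwards [ae_pos hμ0, hne] with y hy hy'
        exact ⟨hy, Or.inr hy'⟩
    filter_upwards [hae] with y ⟨hy, hy'⟩
    have h1 : HasDerivAt (fun u : ℝ => max u 0 ^ m)
        ((m : ℝ) * (if 0 < y - s then (y - s) ^ (m - 1) else 0)) (y - s) := by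
      apply hasDerivAt_maxpow hm1
      rcases hy' with h | h
      · exact Or.inl h
      · exact Or.inr (sub_ne_zero.mpr h)
    have h2 : HasDerivAt (fun t : ℝ => y - t) (-1) s := by
      simpa using (hasDerivAt_id s).const_sub y
    have h3 := (h1.comp s h2).div_const (y ^ k)
    have hfun : (fun t : ℝ => max (y - t) 0 ^ m / y ^ k)
        = fun t : ℝ => (if t < y then (y - t) ^ (k - j) else 0) / y ^ k := by
      funext t
      rw [if_eq_maxpow hm1]
    rw [show ((fun u : ℝ => max u 0 ^ m) ∘ fun t : ℝ => y - t)
        = fun t : ℝ => max (y - t) 0 ^ m from rfl, hfun] at h3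
    refine h3.congr_deriv ?_
    have hif : (if s < y then (y - s) ^ (k - (j+1)) else 0)
        = (if 0 < y - s then (y - s) ^ (m - 1) else 0) := by
      rw [show k - (j+1) = m - 1 by omega]
      congr 1
      simp [sub_pos]
    rw [hif]
    ring

lemma sum_psi [IsProbabilityMeasure μ] (hμ0 : μ (Iic 0) = 0) (hk : 1 ≤ k) {t : ℝ} (ht : 0 < t) :
    ∑ j ∈ Finset.range (k + 1), (k.choose j : ℝ) * t ^ j * psi k μ j t
      = (μ (Ioi t)).toReal := by
  have hint : ∀ j ∈ Finset.range (k + 1), Integrable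
      (fun y : ℝ => (k.choose j : ℝ) * t ^ j * ((if t < y then (y - t) ^ (k - j) else 0) / y ^ k)) μ := by
    intro j hj
    rw [Finset.mem_range] at hj
    exact (integrand_integrable hμ0 (by omega) ht).const_mul _
  calc ∑ j ∈ Finset.range (k + 1), (k.choose j : ℝ) * t ^ j * psi k μ j t
      = ∑ j ∈ Finset.range (k + 1), ∫ y, (k.choose j : ℝ) * t ^ j *
          ((if t < y then (y - t) ^ (k - j) else 0) / y ^ k) ∂μ := by
        apply Finset.sum_congr rfl
        intro j _
        rw [psi, integral_const_mul]
    _ = ∫ y, ∑ j ∈ Finset.range (k + 1), (k.choose j : ℝ) * t ^ j *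
          ((if t < y then (y - t) ^ (k - j) else 0) / y ^ k) ∂μ := (integral_finset_sum _ hint).symm
    _ = ∫ y, (Ioi t).indicator (fun _ => (1:ℝ)) y ∂μ := by
        congr 1
        funext y
        rcases lt_or_ge t y with h | h
        · have hy : 0 < y := lt_trans ht h
          have hyk : y ^ k ≠ 0 := (pow_pos hy k).ne'
          simp only [if_pos h, indicator_apply, mem_Ioi, h, if_true]
          have hstep : ∑ j ∈ Finset.range (k + 1), (k.choose j : ℝ) * t ^ j *
              ((y - t) ^ (k - j) / y ^ k)
              = (∑ j ∈ Finset.range (k + 1), (k.choose j : ℝ) * t ^ j * (y - t) ^ (k - j)) / y ^ k := by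
            rw [Finset.sum_div]
            apply Finset.sum_congr rfl
            intro j _
            ring
          rw [hstep, div_eq_one_iff_eq hyk]
          have := add_pow t (y - t) k
          calc ∑ j ∈ Finset.range (k + 1), (k.choose j : ℝ) * t ^ j * (y - t) ^ (k - j)
              = ∑ j ∈ Finset.range (k + 1), t ^ j * (y - t) ^ (k - j) * (k.choose j : ℝ) := by
                apply Finset.sum_congr rfl; intro j _; ring
            _ = (t + (y - t)) ^ k := this.symm
            _ = y ^ k := by ring_nf
        · simp only [if_neg (not_lt.mpr h), indicator_apply, mem_Ioi, not_lt.mpr h, if_false]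
          simp
    _ = (μ (Ioi t)).toReal := by
        rw [integral_indicator_const (1:ℝ) measurableSet_Ioi]
        simp [measureReal_def]


lemma inner_x_integral (hk : 1 ≤ k) {t y : ℝ} (ht : 0 < t) (hy : 0 < y) :
    ∫ x in Ioc (0:ℝ) t, ((k:ℝ) / y ^ k) * (if x < y then (y - x) ^ (k-1) else 0)
      = 1 - max (y - t) 0 ^ k / y ^ k := by
  have hyk : (0:ℝ) < y ^ k := pow_pos hy k
  have hind : (fun x : ℝ => if x < y then (y - x) ^ (k-1) else (0:ℝ))
      = (Iio y).indicator (fun x => (y - x) ^ (k-1)) := by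
    funext x
    by_cases h : x < y <;> simp [Set.indicator_apply, mem_Iio, h]
  have hset : (Ioc (0:ℝ) t ∩ Iio y : Set ℝ) =ᵐ[volume] (Ioc 0 (min t y) : Set ℝ) := by
    rcases le_or_gt y t with h | h
    · have e : Ioc (0:ℝ) t ∩ Iio y = Ioo 0 y := by
        ext x
        simp only [mem_inter_iff, mem_Ioc, mem_Iio, mem_Ioo]
        constructor
        · rintro ⟨⟨h1, _⟩, h3⟩; exact ⟨h1, h3⟩
        · rintro ⟨h1, h3⟩; exact ⟨⟨h1, le_trans h3.le h⟩, h3⟩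
      rw [e, min_eq_right h]
      exact Ioo_ae_eq_Ioc
    · have e : Ioc (0:ℝ) t ∩ Iio y = Ioc 0 t :=
        inter_eq_left.mpr fun x hx => lt_of_le_of_lt hx.2 h
      rw [e, min_eq_left h.le]
      exact ae_eq_refl _
  have hmin : (0:ℝ) ≤ min t y := le_min ht.le hy.le
  calc ∫ x in Ioc (0:ℝ) t, ((k:ℝ) / y ^ k) * (if x < y then (y - x) ^ (k-1) else 0)
      = ((k:ℝ) / y ^ k) * ∫ x in Ioc (0:ℝ) t, (if x < y then (y - x) ^ (k-1) else 0) :=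
        integral_const_mul _ _
    _ = ((k:ℝ) / y ^ k) * ∫ x in Ioc (0:ℝ) t ∩ Iio y, (y - x) ^ (k-1) := by
        rw [hind, setIntegral_indicator measurableSet_Iio]
    _ = ((k:ℝ) / y ^ k) * ∫ x in Ioc (0:ℝ) (min t y), (y - x) ^ (k-1) := by
        rw [setIntegral_congr_set hset]
    _ = ((k:ℝ) / y ^ k) * ∫ x in (0:ℝ)..(min t y), (y - x) ^ (k-1) := by
        rw [intervalIntegral.integral_of_le hmin]
    _ = ((k:ℝ) / y ^ k) * ((y ^ k - (y - min t y) ^ k) / k) := by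
        congr 1
        rw [intervalIntegral.integral_comp_sub_left (fun x => x ^ (k-1)) y]
        rw [integral_pow]
        rw [show (k - 1) + 1 = k from by omega]
        rw [show ((k - 1 : ℕ) : ℝ) + 1 = (k : ℝ) from by
          rw [Nat.cast_sub hk]; push_cast; ring]
        rw [sub_zero]
    _ = 1 - (y - min t y) ^ k / y ^ k := by
        have hk0 : (k:ℝ) ≠ 0 := Nat.cast_ne_zero.mpr (by omega)
        field_simp
    _ = 1 - max (y - t) 0 ^ k / y ^ k := by
        have : y - min t y = max (y - t) 0 := by
          rw [← max_sub_sub_left y t y, sub_self]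
        rw [this]

lemma G_val [IsProbabilityMeasure μ] (hμ0 : μ (Iic 0) = 0) (hk : 1 ≤ k) {t : ℝ} (ht : 0 < t) :
    (∫ x in (0:ℝ)..t, ∫ y, ((k:ℝ) / y ^ k) * (if x < y then (y - x) ^ (k-1) else 0) ∂μ)
      = 1 - psi k μ 0 t := by
  set P : ℝ → ℝ → ℝ := fun x y => ((k:ℝ) / y ^ k) * (if x < y then (y - x) ^ (k-1) else 0)
    with hP
  have hPmeas : Measurable (Function.uncurry P) := by
    apply Measurable.mul
    · exact measurable_const.div (measurable_snd.pow_const k)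
    · exact Measurable.ite (measurableSet_lt measurable_fst measurable_snd)
        ((measurable_snd.sub measurable_fst).pow_const _) measurable_const
  have hPm1 : ∀ x : ℝ, Measurable (fun y => P x y) := by
    intro x
    apply Measurable.mul (measurable_const.div (measurable_id.pow_const k))
    exact Measurable.ite measurableSet_Ioi ((measurable_id.sub_const x).pow_const _)
      measurable_const
  have hPm2 : ∀ y : ℝ, Measurable (fun x => P x y) := by
    intro y
    apply Measurable.mul measurable_const
    exact Measurable.ite measurableSet_Iio ((measurable_const.sub measurable_id).pow_const _)
      measurable_const
  have hPnonneg : ∀ x y : ℝ, 0 < x → 0 ≤ P x y := by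
    intro x y hx
    rw [hP]
    dsimp only
    rcases lt_or_ge x y with h | h
    · rw [if_pos h]
      have hy : 0 < y := lt_trans hx h
      have : (0:ℝ) ≤ y - x := by linarith
      positivity
    · rw [if_neg (not_lt.mpr h), mul_zero]
  have hPxint : ∀ x : ℝ, 0 < x → Integrable (fun y => P x y) μ := by
    intro x hx
    refine Integrable.mono' (integrable_const ((k:ℝ) / x)) ?_ ?_
    · exact (hPm1 x).aestronglyMeasurable
    · apply Eventually.of_forall
      intro y
      rw [Real.norm_eq_abs, hP]
      dsimp only
      rcases lt_or_ge x y with h | h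
      · have hy : 0 < y := lt_trans hx h
        have hyk : (0:ℝ) < y ^ k := pow_pos hy k
        rw [if_pos h, abs_of_nonneg (mul_nonneg (by positivity)
          (pow_nonneg (by linarith) _))]
        have h1 : (y - x) ^ (k-1) ≤ y ^ (k-1) :=
          pow_le_pow_left₀ (by linarith) (by linarith) _
        calc (k:ℝ)/y^k * (y-x)^(k-1) ≤ (k:ℝ)/y^k * y^(k-1) := by
              apply mul_le_mul_of_nonneg_left h1 (by positivity)
          _ = (k:ℝ)/y := by
              rw [show y ^ k = y ^ (k-1) * y from by rw [← pow_succ]; congr 1; omega]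
              have h2 : y ^ (k-1) ≠ 0 := (pow_pos hy _).ne'
              field_simp
          _ ≤ (k:ℝ)/x := by
              apply div_le_div_of_nonneg_left (Nat.cast_nonneg k) hx h.le
      · rw [if_neg (not_lt.mpr h), mul_zero, abs_zero]
        positivity
  set h : ℝ → ℝ := fun y => 1 - max (y - t) 0 ^ k / y ^ k with hh
  have hh_meas : Measurable h := by
    apply Measurable.const_sub
    apply Measurable.div _ (measurable_id.pow_const k)
    exact (((measurable_id.sub_const t).max measurable_const).pow_const k)
  have hh_nonneg : ∀ᵐ y ∂μ, 0 ≤ h y := by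
    filter_upwards [ae_pos hμ0] with y hy
    rw [hh]
    dsimp only
    have hyk : (0:ℝ) < y ^ k := pow_pos hy k
    have h1 : max (y - t) 0 ^ k ≤ y ^ k := by
      apply pow_le_pow_left₀ (le_max_right _ _)
      exact max_le (by linarith) hy.le
    have : max (y - t) 0 ^ k / y ^ k ≤ 1 := by
      rw [div_le_one hyk]; exact h1
    linarith
  have hh_int : Integrable h μ := by
    refine Integrable.mono' (integrable_const 1) hh_meas.aestronglyMeasurable ?_
    filter_upwards [hh_nonneg, ae_pos hμ0] with y h0 hy
    rw [Real.norm_eq_abs, abs_of_nonneg h0, hh]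
    dsimp only
    have : (0:ℝ) ≤ max (y - t) 0 ^ k / y ^ k := by positivity
    linarith
  have hgmeas : StronglyMeasurable (fun x => ∫ y, P x y ∂μ) :=
    hPmeas.stronglyMeasurable.integral_prod_right'
  have hlin : (∫⁻ x in Ioc (0:ℝ) t, ENNReal.ofReal (∫ y, P x y ∂μ))
      = ∫⁻ y, ENNReal.ofReal (h y) ∂μ := by
    calc ∫⁻ x in Ioc (0:ℝ) t, ENNReal.ofReal (∫ y, P x y ∂μ)
        = ∫⁻ x in Ioc (0:ℝ) t, ∫⁻ y, ENNReal.ofReal (P x y) ∂μ := by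
          apply lintegral_congr_ae
          filter_upwards [ae_restrict_mem measurableSet_Ioc] with x hx
          exact ofReal_integral_eq_lintegral_ofReal (hPxint x hx.1)
            (Eventually.of_forall fun y => hPnonneg x y hx.1)
      _ = ∫⁻ y, (∫⁻ x in Ioc (0:ℝ) t, ENNReal.ofReal (P x y)) ∂μ := by
          apply lintegral_lintegral_swap
          exact (hPmeas.ennreal_ofReal).aemeasurable
      _ = ∫⁻ y, ENNReal.ofReal (h y) ∂μ := by
          apply lintegral_congr_ae
          filter_upwards [ae_pos hμ0] with y hy
          have hint : Integrable (fun x => P x y) (volume.restrict (Ioc (0:ℝ) t)) := by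
            refine Integrable.mono'
              ((integrableOn_const (C := (k:ℝ)/y^k * y^(k-1)) measure_Ioc_lt_top.ne) :
                Integrable (fun _ : ℝ => (k:ℝ)/y^k * y^(k-1)) (volume.restrict (Ioc (0:ℝ) t)))
              ?_ ?_
            · exact (hPm2 y).aestronglyMeasurable
            · filter_upwards [ae_restrict_mem measurableSet_Ioc] with x hx
              rw [Real.norm_eq_abs, hP]
              dsimp only
              rcases lt_or_ge x y with hxy | hxy
              · rw [if_pos hxy, abs_of_nonneg (mul_nonneg (by positivity)
                  (pow_nonneg (by linarith [hx.1]) _))]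
                apply mul_le_mul_of_nonneg_left _ (by positivity)
                exact pow_le_pow_left₀ (by linarith [hx.1]) (by linarith [hx.1]) _
              · rw [if_neg (not_lt.mpr hxy), mul_zero, abs_zero]
                positivity
          rw [← ofReal_integral_eq_lintegral_ofReal hint ?_]
          · rw [inner_x_integral hk ht hy]
          · filter_upwards [ae_restrict_mem measurableSet_Ioc] with x hx
            exact hPnonneg x y hx.1
  have step1 : (∫ x in (0:ℝ)..t, ∫ y, P x y ∂μ) = ∫ x in Ioc (0:ℝ) t, ∫ y, P x y ∂μ :=
    intervalIntegral.integral_of_le ht.le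
  have step2 : ∫ x in Ioc (0:ℝ) t, (∫ y, P x y ∂μ)
      = (∫⁻ x in Ioc (0:ℝ) t, ENNReal.ofReal (∫ y, P x y ∂μ)).toReal := by
    apply integral_eq_lintegral_of_nonneg_ae
    · filter_upwards [ae_restrict_mem measurableSet_Ioc] with x hx
      exact integral_nonneg fun y => hPnonneg x y hx.1
    · exact hgmeas.aestronglyMeasurable
  have step3 : ∫ y, h y ∂μ = (∫⁻ y, ENNReal.ofReal (h y) ∂μ).toReal :=
    integral_eq_lintegral_of_nonneg_ae hh_nonneg hh_meas.aestronglyMeasurable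
  have hfinal : (∫ x in (0:ℝ)..t, ∫ y, P x y ∂μ) = ∫ y, h y ∂μ := by
    rw [step1, step2, hlin, ← step3]
  rw [hfinal]
  have hq : (fun y : ℝ => max (y - t) 0 ^ k / y ^ k)
      = fun y : ℝ => (if t < y then (y - t) ^ (k - 0) else 0) / y ^ k := by
    funext y
    rw [Nat.sub_zero, if_eq_maxpow hk]
  have hq_int : Integrable (fun y : ℝ => max (y - t) 0 ^ k / y ^ k) μ := by
    rw [hq]
    exact integrand_integrable hμ0 (Nat.zero_le k) ht
  have : ∫ y, h y ∂μ = (∫ y, (1:ℝ) ∂μ) - ∫ y, max (y - t) 0 ^ k / y ^ k ∂μ := by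
    rw [← integral_sub (integrable_const 1) hq_int]
  rw [this, hq]
  simp [psi, measure_univ]


noncomputable def FF (k : ℕ) (μ : Measure ℝ) : ℕ → ℝ → ℝ := fun j s =>
  if j = 0 then 1 - psi k μ 0 s
  else (-1:ℝ)^(j+1) * (k.descFactorial j : ℝ) * psi k μ j s

lemma hasDerivAt_FF [IsFiniteMeasure μ] (hμ0 : μ (Iic 0) = 0) {j : ℕ} (hj : j + 1 ≤ k)
    {s : ℝ} (hs : 0 < s) (hcond : j + 2 ≤ k ∨ μ {s} = 0) :
    HasDerivAt (FF k μ j) (FF k μ (j+1) s) s := by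
  have hd := hasDerivAt_psi hμ0 hj hs hcond
  rcases Nat.eq_zero_or_pos j with rfl | hj0
  · have e0 : FF k μ 0 = fun u => 1 - psi k μ 0 u := by
      funext u; simp [FF]
    rw [e0]
    have e1 : FF k μ 1 s = (k:ℝ) * psi k μ 1 s := by
      norm_num [FF, Nat.descFactorial_one]
    rw [show (0:ℕ) + 1 = 1 from rfl, e1]
    refine (hd.const_sub 1).congr_deriv ?_
    rw [Nat.sub_zero]
    ring
  · have e1 : FF k μ j = fun u => (-1:ℝ)^(j+1) * (k.descFactorial j : ℝ) * psi k μ j u := by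
      funext u; simp only [FF, if_neg (by omega : ¬ j = 0)]
    rw [e1]
    have h2 := hd.const_mul ((-1:ℝ)^(j+1) * (k.descFactorial j : ℝ))
    refine h2.congr_deriv ?_
    simp only [FF, if_neg (by omega : ¬ j + 1 = 0)]
    rw [Nat.descFactorial_succ, pow_succ]
    push_cast [Nat.cast_sub (show j ≤ k by omega)]
    ring

lemma neg_one_pow_mul_neg_one_pow_succ (n : ℕ) : (-1:ℝ)^n * (-1:ℝ)^(n+1) = -1 := by
  rw [pow_succ, ← mul_assoc, ← pow_add, ← two_mul, pow_mul]
  norm_num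

end Stmt15Aux

open Stmt15Aux

theorem stmt15 (k : ℕ) (hk : 1 ≤ k) (μ : Measure ℝ) [IsProbabilityMeasure μ]
    (hμ : μ (Iic 0) = 0)
    (g G : ℝ → ℝ)
    (hg : ∀ x, g x = ∫ y, ((k:ℝ) / y ^ k) *
      (if x < y then (y - x) ^ (k-1) else 0) ∂μ)
    (hG : ∀ t, G t = ∫ x in (0:ℝ)..t, g x) :
    ∀ t : ℝ, 0 < t → μ {t} = 0 →
      (∀ j < k, DifferentiableAt ℝ (iteratedDeriv j G) t) ∧
      (μ (Ioc 0 t)).toReal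
        = ∑ j ∈ Finset.range (k+1),
            (-1:ℝ)^j * (t ^ j / (Nat.factorial j : ℝ)) * iteratedDeriv j G t := by
  intro t ht hμt
  have main_eq : ∀ j, j < k → Set.EqOn (iteratedDeriv j G) (FF k μ j) (Ioi 0) := by
    intro j
    induction j with
    | zero =>
      intro _ s hs
      rw [iteratedDeriv_zero]
      simp only [FF, if_pos rfl]
      rw [hG s]
      rw [show (∫ x in (0:ℝ)..s, g x)
          = ∫ x in (0:ℝ)..s, ∫ y, ((k:ℝ) / y ^ k) * (if x < y then (y - x) ^ (k-1) else 0) ∂μ from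
        intervalIntegral.integral_congr fun x _ => hg x]
      exact G_val hμ hk hs
    | succ j ih =>
      intro hjk s hs
      have hj : j < k := by omega
      rw [iteratedDeriv_succ]
      have heq : iteratedDeriv j G =ᶠ[𝓝 s] FF k μ j :=
        eventuallyEq_of_mem (isOpen_Ioi.mem_nhds hs) (ih hj)
      rw [heq.deriv_eq]
      exact (hasDerivAt_FF hμ (by omega) hs (Or.inl (by omega))).deriv
  have hdiff : ∀ j < k, DifferentiableAt ℝ (iteratedDeriv j G) t := by
    intro j hj
    have heq : iteratedDeriv j G =ᶠ[𝓝 t] FF k μ j :=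
      eventuallyEq_of_mem (isOpen_Ioi.mem_nhds ht) (main_eq j hj)
    have hcond : j + 2 ≤ k ∨ μ {t} = 0 := by
      by_cases h2 : j + 2 ≤ k
      exacts [Or.inl h2, Or.inr hμt]
    exact ((hasDerivAt_FF hμ (by omega) ht hcond).differentiableAt).congr_of_eventuallyEq heq
  refine ⟨hdiff, ?_⟩
  have hvals : ∀ j, j ≤ k → iteratedDeriv j G t = FF k μ j t := by
    intro j hj
    by_cases hlt : j < k
    · exact main_eq j hlt (mem_Ioi.mpr ht)
    · have hjk : j = k := by omega
      obtain ⟨k', hk'⟩ : ∃ k', k = k' + 1 := ⟨k - 1, by omega⟩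
      rw [hjk, hk', iteratedDeriv_succ]
      have heq : iteratedDeriv k' G =ᶠ[𝓝 t] FF k μ k' :=
        eventuallyEq_of_mem (isOpen_Ioi.mem_nhds ht) (main_eq k' (by omega))
      rw [hk'] at heq
      rw [heq.deriv_eq]
      exact (hasDerivAt_FF hμ le_rfl ht (Or.inr hμt)).deriv
  have hsum := sum_psi (μ := μ) hμ hk ht
  have hmeas_split : (μ (Ioc 0 t)).toReal + (μ (Ioi t)).toReal = 1 := by
    have hdisj : Disjoint (Ioc (0:ℝ) t) (Ioi t) := Ioc_disjoint_Ioi le_rfl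
    have hunion : Ioc (0:ℝ) t ∪ Ioi t = Ioi 0 := Ioc_union_Ioi_eq_Ioi ht.le
    have h1 : μ (Ioi (0:ℝ)) = 1 := by
      have h2 := measure_add_measure_compl (μ := μ) (measurableSet_Ioi (a := (0:ℝ)))
      rw [compl_Ioi, hμ, add_zero, measure_univ] at h2
      exact h2
    have h3 : μ (Ioc 0 t) + μ (Ioi t) = 1 := by
      rw [← measure_union hdisj measurableSet_Ioi, hunion, h1]
    rw [← ENNReal.toReal_add (measure_ne_top μ _) (measure_ne_top μ _), h3, ENNReal.toReal_one]
  rw [Finset.sum_congr rfl (fun j hj => by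
    rw [hvals j (by rw [Finset.mem_range] at hj; omega)])]
  rw [Finset.sum_range_succ']
  have hf0 : (-1:ℝ)^0 * (t ^ 0 / (Nat.factorial 0 : ℝ)) * FF k μ 0 t
      = 1 - psi k μ 0 t := by
    simp [FF]
  have hfj : ∀ j ∈ Finset.range k, (-1:ℝ)^(j+1) * (t ^ (j+1) / (Nat.factorial (j+1) : ℝ))
      * FF k μ (j+1) t = -((k.choose (j+1) : ℝ) * t ^ (j+1) * psi k μ (j+1) t) := by
    intro j _
    simp only [FF, if_neg (Nat.succ_ne_zero j)]
    rw [Nat.descFactorial_eq_factorial_mul_choose]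
    have hfac : ((Nat.factorial (j+1) : ℝ)) ≠ 0 := Nat.cast_ne_zero.mpr (Nat.factorial_ne_zero _)
    have hsign := neg_one_pow_mul_neg_one_pow_succ (j+1)
    have hpow : (-1:ℝ) ^ (j * 2) = 1 := Even.neg_one_pow ⟨j, by ring⟩
    push_cast
    field_simp
    linear_combination (((Nat.factorial (j+1) : ℝ)) * t ^ (j+1) * (k.choose (j+1) : ℝ)
      * psi k μ (j+1) t) * hsign + ((k.choose (j+1) : ℝ) * psi k μ (j+1) t * (Nat.factorial (j+1) : ℝ)
      * t * t ^ j - (k.choose (j+1) : ℝ) * psi k μ (j+1) t) * hpow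
  rw [Finset.sum_congr rfl hfj, hf0]
  rw [Finset.sum_range_succ'] at hsum
  simp only [pow_zero, Nat.choose_zero_right, Nat.cast_one, one_mul] at hsum
  have hneg : ∑ j ∈ Finset.range k, -((k.choose (j+1) : ℝ) * t ^ (j+1) * psi k μ (j+1) t)
      = -∑ j ∈ Finset.range k, ((k.choose (j+1) : ℝ) * t ^ (j+1) * psi k μ (j+1) t) := by
    rw [← Finset.sum_neg_distrib]
  rw [hneg]
  linarith [hsum, hmeas_split]
end
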